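/- For every function x in the class 𝒳 (all sums x = Σ_{m,k} θ_{m,k} e_{m,k} with θ_{m,k} ∈ {−1,+1}) and every t ∈ [0,1], one has |x(t)| ≤ x̂(t), where x̂ is the function with all coefficients equal to +1. Consequently max_{x∈𝒳} max_{t∈[0,1]} |x(t)| = (2 + √2)/3. -/
import Mathlib
noncomputable def e00 (t : ℝ) : ℝ := max (min t (1 - t)) 0

noncomputable def e (m : ℕ) (k : ℤ) (t : ℝ) : ℝ :=
  (2 : ℝ) ^ (-(m : ℝ) / 2) * e00 ((2 : ℝ) ^ m * t - k)

noncomputable def xhat (t : ℝ) : ℝ :=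
  ∑' m : ℕ, ∑ k ∈ Finset.range (2 ^ m), e m k t

def mathcalX : Set (ℝ → ℝ) :=
  {x | ∃ θ : ℕ → ℕ → ℝ, (∀ m k, θ m k = 1 ∨ θ m k = -1) ∧
    ∀ t, x t = ∑' m : ℕ, ∑ k ∈ Finset.range (2 ^ m), θ m k * e m k t}

noncomputable def aa : ℝ := (Real.sqrt 2)⁻¹

noncomputable def sfun (x : ℝ) : ℝ := min (Int.fract x) (1 - Int.fract x)

noncomputable def psi (x : ℝ) : ℝ := 3/4 * max (1/3 - sfun x) 0

lemma sqrt2_sq : Real.sqrt 2 * Real.sqrt 2 = 2 := Real.mul_self_sqrt (by norm_num)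

lemma sqrt2_gt : 1 < Real.sqrt 2 := by
  nlinarith [sqrt2_sq, Real.sqrt_nonneg 2]

lemma aa_pos : 0 < aa := by
  have := sqrt2_gt; unfold aa; positivity

lemma aa_lt_one : aa < 1 := by
  unfold aa
  rw [inv_lt_one_iff₀]
  right; exact sqrt2_gt

lemma aa_ge : 2/3 ≤ aa := by
  have hs : Real.sqrt 2 ≤ 3/2 := by nlinarith [sqrt2_sq, Real.sqrt_nonneg 2]
  have h1 : Real.sqrt 2 * aa = 1 := mul_inv_cancel₀ (by positivity : Real.sqrt 2 ≠ 0)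
  nlinarith [aa_pos]

lemma sfun_nonneg (x : ℝ) : 0 ≤ sfun x :=
  le_min (Int.fract_nonneg x) (by linarith [Int.fract_lt_one x])

lemma sfun_le_one (x : ℝ) : sfun x ≤ 1 := by
  have := Int.fract_nonneg x
  calc sfun x ≤ 1 - Int.fract x := min_le_right _ _
  _ ≤ 1 := by linarith

lemma psi_nonneg (x : ℝ) : 0 ≤ psi x := by
  unfold psi; positivity

lemma psi_le (x : ℝ) : psi x ≤ 1/4 := by
  unfold psi
  have h : max (1/3 - sfun x) 0 ≤ 1/3 :=
    max_le (by linarith [sfun_nonneg x]) (by norm_num)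
  linarith

lemma fract_two_mul (y : ℝ) : Int.fract (2*y) = Int.fract (2 * Int.fract y) := by
  have h : 2*y = 2 * Int.fract y + ((2*⌊y⌋ : ℤ) : ℝ) := by
    rw [Int.fract]; push_cast; ring
  rw [h, Int.fract_add_intCast]

lemma e_eq (m : ℕ) (k : ℤ) (t : ℝ) : e m k t = aa^m * e00 ((2:ℝ)^m * t - k) := by
  unfold e
  congr 1
  rw [show (-(m:ℝ)/2) = (-(1/2) * (m:ℕ) : ℝ) by ring,
    Real.rpow_mul (by norm_num), Real.rpow_natCast]
  congr 1
  rw [Real.rpow_neg (by norm_num), ← Real.sqrt_eq_rpow]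
  rfl

lemma e00_nonneg (z : ℝ) : 0 ≤ e00 z := le_max_right _ _

lemma e00_zero_of_nonpos {z : ℝ} (h : z ≤ 0) : e00 z = 0 := by
  unfold e00
  rw [max_eq_right]
  exact le_trans (min_le_left _ _) h

lemma e00_zero_of_one_le {z : ℝ} (h : 1 ≤ z) : e00 z = 0 := by
  unfold e00
  rw [max_eq_right]
  exact le_trans (min_le_right _ _) (by linarith)

lemma rowsum (m : ℕ) {t : ℝ} (h0 : 0 ≤ t) (h1 : t ≤ 1) :
    ∑ k ∈ Finset.range (2^m), e00 ((2:ℝ)^m * t - (k:ℝ)) = sfun ((2:ℝ)^m * t) := by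
  set y : ℝ := (2:ℝ)^m * t with hy
  have hy0 : 0 ≤ y := by positivity
  have hy2 : y ≤ (2:ℝ)^m := by
    rw [hy]; nlinarith [pow_pos (by norm_num : (0:ℝ) < 2) m]
  rcases eq_or_lt_of_le hy2 with hcase | hcase
  · rw [Finset.sum_eq_zero, hcase]
    · have : Int.fract ((2:ℝ)^m) = 0 := by
        rw [show ((2:ℝ)^m) = ((2^m : ℕ) : ℝ) by push_cast; ring, Int.fract_natCast]
      unfold sfun
      rw [this]; norm_num
    · intro k hk
      apply e00_zero_of_one_le
      have : (k:ℝ) ≤ (2:ℝ)^m - 1 := by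
        have hk' : k + 1 ≤ 2^m := Finset.mem_range.mp hk
        have : ((k+1 : ℕ) : ℝ) ≤ ((2^m : ℕ) : ℝ) := by exact_mod_cast hk'
        push_cast at this ⊢; linarith
      rw [hcase]; linarith
  · set k₀ : ℕ := (⌊y⌋).toNat with hk₀
    have hfl0 : 0 ≤ ⌊y⌋ := Int.floor_nonneg.mpr hy0
    have hk₀c : ((k₀:ℤ):ℝ) = ((⌊y⌋:ℤ):ℝ) := by
      rw [hk₀]; norm_cast; exact Int.toNat_of_nonneg hfl0
    have hfle : ((⌊y⌋:ℤ):ℝ) ≤ y := Int.floor_le y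
    have hflt : y < ((⌊y⌋:ℤ):ℝ) + 1 := Int.lt_floor_add_one y
    have hmem : k₀ ∈ Finset.range (2^m) := by
      rw [Finset.mem_range]
      have h2m : ((2^m : ℕ):ℝ) = (2:ℝ)^m := by push_cast; ring
      have : ((k₀:ℕ):ℝ) < ((2^m : ℕ):ℝ) := by
        rw [h2m]
        push_cast at hk₀c
        calc (k₀:ℝ) = ((⌊y⌋:ℤ):ℝ) := hk₀c
        _ ≤ y := hfle
        _ < (2:ℝ)^m := hcase
      exact_mod_cast this
    rw [Finset.sum_eq_single_of_mem k₀ hmem]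
    · have hfr : y - (k₀:ℝ) = Int.fract y := by
        rw [Int.fract]
        push_cast at hk₀c
        rw [hk₀c]
      rw [hfr]
      unfold e00 sfun
      rw [max_eq_left]
      exact le_min (Int.fract_nonneg y) (by linarith [Int.fract_lt_one y])
    · intro k hk hne
      push_cast at hk₀c
      rcases lt_or_gt_of_ne hne with hlt | hgt
      · apply e00_zero_of_one_le
        have : (k:ℝ) + 1 ≤ (k₀:ℝ) := by exact_mod_cast Nat.succ_le_of_lt hlt
        linarith [hk₀c ▸ hfle]
      · apply e00_zero_of_nonpos
        have : (k₀:ℝ) + 1 ≤ (k:ℝ) := by exact_mod_cast Nat.succ_le_of_lt hgt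
        linarith [hk₀c ▸ hflt]

lemma keyK (y : ℝ) : sfun y + psi y ≤ 1/3 + aa * psi (2*y) := by
  have hu0 := Int.fract_nonneg y
  have hu1 := Int.fract_lt_one y
  set u := Int.fract y with hu
  have haa := aa_ge
  have haa0 : (0:ℝ) ≤ aa := le_of_lt aa_pos
  have hsy : sfun y = min u (1-u) := rfl
  have hpy : psi y = 3/4 * max (1/3 - min u (1-u)) 0 := rfl
  rw [hsy, hpy]
  have hp2 : psi (2*y) = 3/4 * max (1/3 - min (Int.fract (2*u)) (1 - Int.fract (2*u))) 0 := by
    unfold psi sfun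
    rw [fract_two_mul, ← hu]
  rw [hp2]
  rcases lt_or_ge u (1/2) with hhalf | hhalf
  · have hf2 : Int.fract (2*u) = 2*u := Int.fract_eq_self.mpr ⟨by linarith, by linarith⟩
    rw [hf2, min_eq_left (by linarith : u ≤ 1-u)]
    rcases le_or_gt u (1/4) with h14 | h14
    · rw [min_eq_left (by linarith : 2*u ≤ 1-2*u),
        max_eq_left (by linarith : (0:ℝ) ≤ 1/3 - u)]
      rcases le_or_gt u (1/6) with h16 | h16
      · rw [max_eq_left (by linarith : (0:ℝ) ≤ 1/3 - 2*u)]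
        nlinarith [mul_nonneg haa0 (by linarith : (0:ℝ) ≤ 1/3 - 2*u)]
      · rw [max_eq_right (by linarith : 1/3 - 2*u ≤ (0:ℝ))]
        linarith
    · rw [min_eq_right (by linarith : 1-2*u ≤ 2*u)]
      rcases lt_or_ge u (1/3) with h13 | h13
      · rw [max_eq_left (by linarith : (0:ℝ) ≤ 1/3 - u),
          max_eq_right (by linarith : 1/3 - (1-2*u) ≤ (0:ℝ))]
        linarith
      · rw [max_eq_right (by linarith : 1/3 - u ≤ (0:ℝ)),
          max_eq_left (by linarith : (0:ℝ) ≤ 1/3 - (1-2*u))]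
        nlinarith [mul_nonneg (by linarith : (0:ℝ) ≤ aa - 2/3) (by linarith : (0:ℝ) ≤ u - 1/3)]
  · have hf2 : Int.fract (2*u) = 2*u - 1 := by
      have h5 : Int.fract (2*u - 1) = 2*u - 1 :=
        Int.fract_eq_self.mpr ⟨by linarith, by linarith⟩
      calc Int.fract (2*u) = Int.fract (2*u - 1 + ((1:ℤ):ℝ)) := by norm_num
      _ = Int.fract (2*u - 1) := Int.fract_add_intCast _ _
      _ = 2*u - 1 := h5
    rw [hf2, min_eq_right (by linarith : 1-u ≤ u)]
    rcases le_or_gt u (3/4) with h34 | h34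
    · rw [min_eq_left (by linarith : 2*u-1 ≤ 1-(2*u-1))]
      rcases le_or_gt u (2/3) with h23 | h23
      · rw [max_eq_right (by linarith : 1/3 - (1-u) ≤ (0:ℝ)),
          max_eq_left (by linarith : (0:ℝ) ≤ 1/3 - (2*u-1))]
        nlinarith [mul_nonneg (by linarith : (0:ℝ) ≤ aa - 2/3) (by linarith : (0:ℝ) ≤ 2/3 - u)]
      · rw [max_eq_left (by linarith : (0:ℝ) ≤ 1/3 - (1-u)),
          max_eq_right (by linarith : 1/3 - (2*u-1) ≤ (0:ℝ))]
        linarith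
    · rw [min_eq_right (by linarith : 1-(2*u-1) ≤ 2*u-1),
        max_eq_left (by linarith : (0:ℝ) ≤ 1/3 - (1-u))]
      rcases le_or_gt u (5/6) with h56 | h56
      · rw [max_eq_right (by linarith : 1/3 - (1-(2*u-1)) ≤ (0:ℝ))]
        linarith
      · rw [max_eq_left (by linarith : (0:ℝ) ≤ 1/3 - (1-(2*u-1)))]
        nlinarith [mul_nonneg haa0 (by linarith : (0:ℝ) ≤ 2*u - 5/3)]

lemma hCa : (2 + Real.sqrt 2)/3 * (1 - aa) = 1/3 := by
  unfold aa
  have hs : (0:ℝ) < Real.sqrt 2 := by linarith [sqrt2_gt]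
  field_simp
  nlinarith [sqrt2_sq]

lemma claim : ∀ (n : ℕ) (y : ℝ),
    ∑ m ∈ Finset.range n, aa^m * sfun ((2:ℝ)^m * y) ≤ (2 + Real.sqrt 2)/3 - psi y := by
  intro n
  induction n with
  | zero =>
    intro y
    simp only [Finset.range_zero, Finset.sum_empty]
    have := psi_le y
    nlinarith [Real.sqrt_nonneg 2]
  | succ n ih =>
    intro y
    rw [Finset.sum_range_succ']
    have hshift : ∑ m ∈ Finset.range n, aa^(m+1) * sfun ((2:ℝ)^(m+1) * y)
        = aa * ∑ m ∈ Finset.range n, aa^m * sfun ((2:ℝ)^m * (2*y)) := by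
      rw [Finset.mul_sum]
      apply Finset.sum_congr rfl
      intro i _
      rw [pow_succ, show (2:ℝ)^(i+1) * y = (2:ℝ)^i * (2*y) by rw [pow_succ]; ring]
      ring
    rw [hshift]
    have h1 := mul_le_mul_of_nonneg_left (ih (2*y)) (le_of_lt aa_pos)
    have h2 := keyK y
    have h3 : aa * ((2 + Real.sqrt 2)/3) = (2 + Real.sqrt 2)/3 - 1/3 := by
      have := hCa; nlinarith
    simp only [pow_zero, one_mul]
    nlinarith [h1, h2, h3]

lemma e_nonneg (m : ℕ) (k : ℤ) (t : ℝ) : 0 ≤ e m k t := by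
  rw [e_eq]
  exact mul_nonneg (pow_nonneg (le_of_lt aa_pos) m) (e00_nonneg _)

lemma row_e (m : ℕ) {t : ℝ} (h0 : 0 ≤ t) (h1 : t ≤ 1) :
    ∑ k ∈ Finset.range (2^m), e m (k:ℤ) t = aa^m * sfun ((2:ℝ)^m * t) := by
  rw [← rowsum m h0 h1, Finset.mul_sum]
  apply Finset.sum_congr rfl
  intro k _
  rw [e_eq]
  norm_num

lemma summable_row (t : ℝ) : Summable (fun m => aa^m * sfun ((2:ℝ)^m * t)) := by
  apply Summable.of_nonneg_of_le
    (fun m => mul_nonneg (pow_nonneg (le_of_lt aa_pos) m) (sfun_nonneg _))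
    (fun m => ?_) (summable_geometric_of_lt_one (le_of_lt aa_pos) aa_lt_one)
  have h1 := sfun_le_one ((2:ℝ)^m * t)
  have h2 : (0:ℝ) ≤ aa^m := pow_nonneg (le_of_lt aa_pos) m
  nlinarith

lemma xhat_eq {t : ℝ} (h0 : 0 ≤ t) (h1 : t ≤ 1) :
    xhat t = ∑' m : ℕ, aa^m * sfun ((2:ℝ)^m * t) := by
  unfold xhat
  exact tsum_congr (fun m => row_e m h0 h1)

lemma xhat_le {t : ℝ} (h0 : 0 ≤ t) (h1 : t ≤ 1) : xhat t ≤ (2 + Real.sqrt 2)/3 := by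
  rw [xhat_eq h0 h1]
  exact Summable.tsum_le_of_sum_range_le (summable_row t)
    (fun n => (claim n t).trans (by linarith [psi_nonneg t]))

lemma main1 : ∀ x ∈ mathcalX, ∀ t ∈ Set.Icc (0 : ℝ) 1, |x t| ≤ xhat t := by
  rintro x ⟨θ, hθ, hxt⟩ t ⟨h0, h1⟩
  rw [hxt t]
  have habs : ∀ m, |∑ k ∈ Finset.range (2^m), θ m k * e m (k:ℤ) t|
      ≤ aa^m * sfun ((2:ℝ)^m * t) := by
    intro m
    calc |∑ k ∈ Finset.range (2^m), θ m k * e m (k:ℤ) t|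
        ≤ ∑ k ∈ Finset.range (2^m), |θ m k * e m (k:ℤ) t| :=
          Finset.abs_sum_le_sum_abs _ _
    _ = ∑ k ∈ Finset.range (2^m), e m (k:ℤ) t := by
          apply Finset.sum_congr rfl
          intro k _
          rw [abs_mul]
          rcases hθ m k with h | h <;>
            simp [h, abs_of_nonneg (e_nonneg m (k:ℤ) t)]
    _ = aa^m * sfun ((2:ℝ)^m * t) := row_e m h0 h1
  have hsumabs : Summable (fun m => |∑ k ∈ Finset.range (2^m), θ m k * e m (k:ℤ) t|) :=
    Summable.of_nonneg_of_le (fun m => abs_nonneg _) habs (summable_row t)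
  have hsumv : Summable (fun m => ∑ k ∈ Finset.range (2^m), θ m k * e m (k:ℤ) t) :=
    Summable.of_abs hsumabs
  calc |∑' m : ℕ, ∑ k ∈ Finset.range (2^m), θ m k * e m (k:ℤ) t|
      ≤ ∑' m : ℕ, |∑ k ∈ Finset.range (2^m), θ m k * e m (k:ℤ) t| := by
        have := norm_tsum_le_tsum_norm
          (f := fun m => ∑ k ∈ Finset.range (2^m), θ m k * e m (k:ℤ) t)
          (by simpa [Real.norm_eq_abs] using hsumabs)
        simpa [Real.norm_eq_abs] using this
  _ ≤ ∑' m : ℕ, aa^m * sfun ((2:ℝ)^m * t) :=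
        Summable.tsum_le_tsum habs hsumabs (summable_row t)
  _ = xhat t := (xhat_eq h0 h1).symm

lemma fr : ∀ m : ℕ, Int.fract ((2:ℝ)^m * (1/3)) = 1/3 ∨ Int.fract ((2:ℝ)^m * (1/3)) = 2/3 := by
  intro m
  induction m with
  | zero =>
    left
    norm_num
  | succ m ih =>
    rw [show (2:ℝ)^(m+1) * (1/3) = 2 * ((2:ℝ)^m * (1/3)) by ring, fract_two_mul]
    rcases ih with h1 | h1 <;> rw [h1]
    · right
      rw [show (2:ℝ) * (1/3) = 2/3 by norm_num]
      exact Int.fract_eq_self.mpr ⟨by norm_num, by norm_num⟩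
    · left
      rw [show (2:ℝ) * (2/3) = 1/3 + ((1:ℤ):ℝ) by norm_num, Int.fract_add_intCast]
      exact Int.fract_eq_self.mpr ⟨by norm_num, by norm_num⟩

lemma sfun13 (m : ℕ) : sfun ((2:ℝ)^m * (1/3)) = 1/3 := by
  unfold sfun
  rcases fr m with h | h <;> rw [h] <;> norm_num

lemma xhat13 : xhat (1/3) = (2 + Real.sqrt 2)/3 := by
  rw [xhat_eq (by norm_num) (by norm_num)]
  have : (fun m : ℕ => aa^m * sfun ((2:ℝ)^m * (1/3))) = fun m : ℕ => aa^m * (1/3) := by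
    funext m; rw [sfun13]
  rw [this, tsum_mul_right, tsum_geometric_of_lt_one (le_of_lt aa_pos) aa_lt_one]
  have hne : (1:ℝ) - aa ≠ 0 := by linarith [aa_lt_one]
  rw [inv_mul_eq_div, div_eq_iff hne]
  linarith [hCa]

theorem stmt_7 :
    (∀ x ∈ mathcalX, ∀ t ∈ Set.Icc (0 : ℝ) 1, |x t| ≤ xhat t) ∧
    (∀ x ∈ mathcalX, ∀ t ∈ Set.Icc (0 : ℝ) 1, |x t| ≤ (2 + Real.sqrt 2) / 3) ∧
    (∃ x ∈ mathcalX, ∃ t ∈ Set.Icc (0 : ℝ) 1, |x t| = (2 + Real.sqrt 2) / 3) := by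
  refine ⟨main1, ?_, ?_⟩
  · intro x hx t ht
    exact (main1 x hx t ht).trans (xhat_le ht.1 ht.2)
  · refine ⟨xhat, ⟨fun _ _ => 1, fun _ _ => Or.inl rfl, fun t => by simp [xhat]⟩,
      1/3, ⟨by norm_num, by norm_num⟩, ?_⟩
    rw [xhat13]
    exact abs_of_nonneg (by positivity)
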